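/- With W, J, K, G as above, almost surely ∫₀¹ G(r)² dr = (c² + d²)·∫₀¹ J(r)² dr + J(1)·G(1) − ∫₀¹ J(r) dW(r) − c·J(1)². -/

import Mathlib

open Filter MeasureTheory intervalIntegral

/-- Pathwise Itô integral `∫₀^r f dW` along the path `w`, defined as the limit of
left-endpoint Riemann–Stieltjes sums over uniform partitions of `[0, r]`. -/
noncomputable def itoInt (f w : ℝ → ℝ) (r : ℝ) : ℝ :=
  limUnder atTop (fun n : ℕ => ∑ k ∈ Finset.range n,
    f ((k : ℝ) * r / n) * (w (((k : ℝ) + 1) * r / n) - w ((k : ℝ) * r / n)))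

/-- `J(r) = (1/d)·∫₀^r e^{c(r−s)} sin(d(r−s)) dW(s)`. -/
noncomputable def Jp (c d : ℝ) (w : ℝ → ℝ) (r : ℝ) : ℝ :=
  (1 / d) * itoInt (fun s => Real.exp (c * (r - s)) * Real.sin (d * (r - s))) w r

/-- `K(r) = (1/d)·∫₀^r e^{c(r−s)} cos(d(r−s)) dW(s)`. -/
noncomputable def Kp (c d : ℝ) (w : ℝ → ℝ) (r : ℝ) : ℝ :=
  (1 / d) * itoInt (fun s => Real.exp (c * (r - s)) * Real.cos (d * (r - s))) w r

/-- `G(r) = c·J(r) + d·K(r)`. -/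
noncomputable def Gp (c d : ℝ) (w : ℝ → ℝ) (r : ℝ) : ℝ :=
  c * Jp c d w r + d * Kp c d w r

open Set Topology

lemma psi_eq {r : ℝ} (hr : 0 < r) {n k : ℕ} (hn : 1 ≤ n) {s : ℝ}
    (hs : s ∈ Set.Ioc ((k:ℝ)*r/n) (((k:ℝ)+1)*r/n)) :
    ((⌈s * n / r⌉ : ℤ) : ℝ) * r / n = ((k:ℝ)+1)*r/n := by
  have hn' : (0:ℝ) < n := by exact_mod_cast Nat.pos_of_ne_zero (by omega)
  have hceil : ⌈s * n / r⌉ = (k : ℤ) + 1 := by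
    rw [Int.ceil_eq_iff]
    constructor
    · push_cast
      rw [lt_div_iff₀ hr]
      have := hs.1
      rw [div_lt_iff₀ hn'] at this
      nlinarith [this]
    · push_cast
      rw [div_le_iff₀ hr]
      have := hs.2
      rw [le_div_iff₀ hn'] at this
      nlinarith [this]
  rw [hceil]; push_cast; ring

lemma sum_eq_aux {f f' w : ℝ → ℝ} (hf : ∀ s, HasDerivAt f (f' s) s)
    (hf'c : Continuous f') (hw : Continuous w) {r : ℝ} (hr : 0 < r)
    {n : ℕ} (hn : 1 ≤ n) :
    ∑ k ∈ Finset.range n, f ((k:ℝ)*r/n) * (w (((k:ℝ)+1)*r/n) - w ((k:ℝ)*r/n))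
      = f r * w r - f 0 * w 0
        - ∫ s in (0:ℝ)..r, f' s * w (((⌈s * n / r⌉ : ℤ):ℝ)*r/n) := by
  have hn' : (0:ℝ) < n := by exact_mod_cast Nat.pos_of_ne_zero (by omega)
  set a : ℕ → ℝ := fun k => (k:ℝ)*r/n with ha
  have hmono : ∀ k : ℕ, a k ≤ a (k+1) := by
    intro k
    simp only [ha]
    push_cast
    rw [div_le_div_iff_of_pos_right hn']
    nlinarith
  set ψ : ℝ → ℝ := fun s => ((⌈s * n / r⌉ : ℤ):ℝ)*r/n with hψ
  have hpsiIoc : ∀ k : ℕ, ∀ s ∈ Set.Ioc (a k) (a (k+1)), ψ s = a (k+1) := by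
    intro k s hs
    simp only [ha] at hs
    push_cast at hs
    have := psi_eq hr hn (k := k) (s := s) hs
    simp only [hψ, ha]; push_cast at this ⊢; linarith [this]
  have hpiece : ∀ k : ℕ, (∫ s in a k..a (k+1), f' s * w (ψ s))
      = (f (a (k+1)) - f (a k)) * w (a (k+1)) := by
    intro k
    have h1 : (∫ s in a k..a (k+1), f' s * w (ψ s))
        = ∫ s in a k..a (k+1), f' s * w (a (k+1)) := by
      rw [intervalIntegral.integral_of_le (hmono k), intervalIntegral.integral_of_le (hmono k)]
      refine setIntegral_congr_fun measurableSet_Ioc fun s hs => ?_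
      show f' s * w (ψ s) = f' s * w (a (k+1))
      rw [hpsiIoc k s hs]
    rw [h1, intervalIntegral.integral_mul_const,
      intervalIntegral.integral_eq_sub_of_hasDerivAt (fun s _ => hf s)
        ((hf'c.intervalIntegrable _ _))]
  have hint : ∀ k : ℕ, IntervalIntegrable (fun s => f' s * w (ψ s)) volume (a k) (a (k+1)) := by
    intro k
    rw [intervalIntegrable_iff_integrableOn_Ioc_of_le (hmono k)]
    refine ((hf'c.mul (continuous_const : Continuous fun _ : ℝ => w (a (k+1)))).integrableOn_Ioc).congr_fun
      (fun s hs => ?_) measurableSet_Ioc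
    show f' s * w (a (k+1)) = f' s * w (ψ s)
    rw [hpsiIoc k s hs]
  have hsum : (∫ s in (a 0)..(a n), f' s * w (ψ s))
      = ∑ k ∈ Finset.range n, ((f (a (k+1)) - f (a k)) * w (a (k+1))) := by
    rw [← intervalIntegral.sum_integral_adjacent_intervals (fun k _ => hint k)]
    exact Finset.sum_congr rfl fun k _ => hpiece k
  have ha0 : a 0 = 0 := by simp [ha]
  have han : a n = r := by simp only [ha]; exact mul_div_cancel_left₀ r hn'.ne'
  have htel : ∑ k ∈ Finset.range n, (f (a (k+1)) * w (a (k+1)) - f (a k) * w (a k))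
      = f r * w r - f 0 * w 0 := by
    rw [Finset.sum_range_sub (fun k => f (a k) * w (a k)), ha0, han]
  have hsplit : ∀ k : ℕ, f (a k) * (w (a (k+1)) - w (a k))
      = (f (a (k+1)) * w (a (k+1)) - f (a k) * w (a k))
        - (f (a (k+1)) - f (a k)) * w (a (k+1)) := by intro k; ring
  calc ∑ k ∈ Finset.range n, f ((k:ℝ)*r/n) * (w (((k:ℝ)+1)*r/n) - w ((k:ℝ)*r/n))
      = ∑ k ∈ Finset.range n, f (a k) * (w (a (k+1)) - w (a k)) := by
        refine Finset.sum_congr rfl fun k _ => ?_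
        simp only [ha]; push_cast; ring_nf
    _ = (f r * w r - f 0 * w 0)
        - ∑ k ∈ Finset.range n, ((f (a (k+1)) - f (a k)) * w (a (k+1))) := by
        rw [← htel, ← Finset.sum_sub_distrib]
        exact Finset.sum_congr rfl fun k _ => hsplit k
    _ = f r * w r - f 0 * w 0 - ∫ s in (0:ℝ)..r, f' s * w (ψ s) := by
        rw [← hsum, ha0, han]

lemma riemann_stieltjes {f f' w : ℝ → ℝ} (hf : ∀ s, HasDerivAt f (f' s) s)
    (hf'c : Continuous f') (hw : Continuous w) {r : ℝ} (hr : 0 < r) :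
    Tendsto (fun n : ℕ => ∑ k ∈ Finset.range n,
        f ((k : ℝ) * r / n) * (w (((k : ℝ) + 1) * r / n) - w ((k : ℝ) * r / n))) atTop
      (𝓝 (f r * w r - f 0 * w 0 - ∫ s in (0:ℝ)..r, f' s * w s)) := by
  set ψ : ℕ → ℝ → ℝ := fun n s => ((⌈s * n / r⌉ : ℤ):ℝ)*r/n with hψ
  -- bounds
  obtain ⟨C1, hC1⟩ := (isCompact_Icc (a := (0:ℝ)) (b := r)).exists_bound_of_continuousOn
    hf'c.continuousOn
  obtain ⟨C2, hC2⟩ := (isCompact_Icc (a := (0:ℝ)) (b := r)).exists_bound_of_continuousOn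
    hw.continuousOn
  have hC1' : 0 ≤ C1 := le_trans (norm_nonneg _) (hC1 0 ⟨le_refl _, hr.le⟩)
  have hC2' : 0 ≤ C2 := le_trans (norm_nonneg _) (hC2 0 ⟨le_refl _, hr.le⟩)
  -- the integral tendsto
  have hmain : Tendsto (fun n : ℕ => ∫ s in (0:ℝ)..r, f' s * w (ψ n s)) atTop
      (𝓝 (∫ s in (0:ℝ)..r, f' s * w s)) := by
    apply intervalIntegral.tendsto_integral_filter_of_dominated_convergence
      (bound := fun _ => C1 * C2)
    · filter_upwards with n
      apply Measurable.aestronglyMeasurable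
      have hψm : Measurable (fun s : ℝ => ψ n s) := by
        have h1 : Measurable fun s : ℝ => (⌈s * n / r⌉ : ℤ) :=
          Int.measurable_ceil.comp ((measurable_id.mul_const _).div_const _)
        have h2 : Measurable fun s : ℝ => ((⌈s * n / r⌉ : ℤ) : ℝ) :=
          (measurable_from_top (α := ℤ)).comp h1
        exact (h2.mul_const _).div_const _
      exact (hf'c.measurable).mul (hw.measurable.comp hψm)
    · filter_upwards [eventually_ge_atTop 1] with n hn
      filter_upwards with s hs
      rw [Set.uIoc_of_le hr.le] at hs
      have hn' : (0:ℝ) < n := by exact_mod_cast Nat.pos_of_ne_zero (by omega)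
      have h0s : 0 < s := hs.1
      have h1 : (0:ℝ) < s * n / r := by positivity
      have hceil1 : (0:ℤ) < ⌈s * n / r⌉ := Int.lt_ceil.mpr (by exact_mod_cast h1)
      have hceiln : ⌈s * n / r⌉ ≤ (n:ℤ) := Int.ceil_le.mpr (by
        rw [div_le_iff₀ hr]
        push_cast
        nlinarith [hs.2])
      have hmem : ψ n s ∈ Set.Icc 0 r := by
        have hc1 : (0:ℝ) < ((⌈s * n / r⌉ : ℤ):ℝ) := by exact_mod_cast hceil1
        have hcn : ((⌈s * n / r⌉ : ℤ):ℝ) ≤ (n:ℝ) := by exact_mod_cast hceiln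
        constructor
        · simp only [hψ]; positivity
        · simp only [hψ]
          rw [div_le_iff₀ hn']
          nlinarith
      calc ‖f' s * w (ψ n s)‖ = ‖f' s‖ * ‖w (ψ n s)‖ := norm_mul _ _
        _ ≤ C1 * C2 := mul_le_mul (hC1 s ⟨h0s.le, hs.2⟩) (hC2 _ hmem) (norm_nonneg _) hC1'
    · exact intervalIntegrable_const
    · filter_upwards with s hs
      rw [Set.uIoc_of_le hr.le] at hs
      have hlo : ∀ n : ℕ, 1 ≤ n → s ≤ ψ n s := by
        intro n hn
        have hn' : (0:ℝ) < n := by exact_mod_cast Nat.pos_of_ne_zero (by omega)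
        have := Int.le_ceil (s * n / r)
        simp only [hψ]
        rw [le_div_iff₀ hn', ← div_le_iff₀ hr]
        linarith [this]
      have hhi : ∀ n : ℕ, 1 ≤ n → ψ n s ≤ s + r / n := by
        intro n hn
        have hn' : (0:ℝ) < n := by exact_mod_cast Nat.pos_of_ne_zero (by omega)
        have := Int.ceil_lt_add_one (s * n / r)
        simp only [hψ]
        rw [div_le_iff₀ hn']
        have h2 : ((⌈s * n / r⌉ : ℤ):ℝ) * r ≤ (s * n / r + 1) * r := by nlinarith [this]
        calc ((⌈s * n / r⌉ : ℤ):ℝ) * r ≤ (s * n / r + 1) * r := h2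
          _ = (s + r / n) * n := by field_simp
      have hψt : Tendsto (fun n : ℕ => ψ n s) atTop (𝓝 s) := by
        have h1 : Tendsto (fun n : ℕ => s + r / n) atTop (𝓝 s) := by
          have := tendsto_const_div_atTop_nhds_zero_nat r
          simpa using tendsto_const_nhds.add this
        refine tendsto_of_tendsto_of_tendsto_of_le_of_le' tendsto_const_nhds h1 ?_ ?_
        · filter_upwards [eventually_ge_atTop 1] with n hn using hlo n hn
        · filter_upwards [eventually_ge_atTop 1] with n hn using hhi n hn
      exact (tendsto_const_nhds.mul ((hw.tendsto s).comp hψt))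
  -- conclude
  have heq : ∀ᶠ n : ℕ in atTop,
      (∑ k ∈ Finset.range n,
        f ((k : ℝ) * r / n) * (w (((k : ℝ) + 1) * r / n) - w ((k : ℝ) * r / n)))
      = f r * w r - f 0 * w 0 - ∫ s in (0:ℝ)..r, f' s * w (ψ n s) := by
    filter_upwards [eventually_ge_atTop 1] with n hn
    exact sum_eq_aux hf hf'c hw hr hn
  exact Tendsto.congr' (heq.mono fun n h => h.symm) (tendsto_const_nhds.sub hmain)

noncomputable def Ci (c d : ℝ) (w : ℝ → ℝ) (r : ℝ) : ℝ :=
  ∫ s in (0:ℝ)..r, Real.exp (-(c*s)) * Real.cos (d*s) * w s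

noncomputable def Si (c d : ℝ) (w : ℝ → ℝ) (r : ℝ) : ℝ :=
  ∫ s in (0:ℝ)..r, Real.exp (-(c*s)) * Real.sin (d*s) * w s

noncomputable def Jt (c d : ℝ) (w : ℝ → ℝ) (r : ℝ) : ℝ :=
  (Real.exp (c*r) * (c/d * Real.sin (d*r) + 1 * Real.cos (d*r))) * Ci c d w r
    + (Real.exp (c*r) * (1 * Real.sin (d*r) + (-(c/d)) * Real.cos (d*r))) * Si c d w r

noncomputable def Ht (c d : ℝ) (w : ℝ → ℝ) (r : ℝ) : ℝ :=
  (Real.exp (c*r) * ((c^2/d - d) * Real.sin (d*r) + (2*c) * Real.cos (d*r))) * Ci c d w r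
    + (Real.exp (c*r) * ((2*c) * Real.sin (d*r) + (d - c^2/d) * Real.cos (d*r))) * Si c d w r

noncomputable def Kt (c d : ℝ) (w : ℝ → ℝ) (r : ℝ) : ℝ :=
  (1/d) * (w r + Real.exp (c*r) * ((c*Real.cos (d*r) - d*Real.sin (d*r)) * Ci c d w r
    + (c*Real.sin (d*r) + d*Real.cos (d*r)) * Si c d w r))

lemma trig_hasDeriv (c d α β : ℝ) (r : ℝ) :
    HasDerivAt (fun r => Real.exp (c*r) * (α * Real.sin (d*r) + β * Real.cos (d*r)))
      (Real.exp (c*r) * ((c*α - d*β) * Real.sin (d*r) + (c*β + d*α) * Real.cos (d*r))) r := by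
  have he : HasDerivAt (fun r : ℝ => Real.exp (c*r)) (Real.exp (c*r) * c) r := by
    simpa using ((hasDerivAt_id r).const_mul c).exp
  have hs : HasDerivAt (fun r : ℝ => Real.sin (d*r)) (Real.cos (d*r) * d) r := by
    simpa using ((hasDerivAt_id r).const_mul d).sin
  have hc : HasDerivAt (fun r : ℝ => Real.cos (d*r)) (-Real.sin (d*r) * d) r := by
    simpa using ((hasDerivAt_id r).const_mul d).cos
  have := he.fun_mul ((hs.const_mul α).fun_add (hc.const_mul β))
  refine this.congr_deriv (Eq.symm ?_)
  ring

section
variable {c d : ℝ} {w : ℝ → ℝ}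

lemma Ci_hasDeriv (c d : ℝ) (hw : Continuous w) (r : ℝ) :
    HasDerivAt (Ci c d w) (Real.exp (-(c*r)) * Real.cos (d*r) * w r) r := by
  have hcont : Continuous fun s => Real.exp (-(c*s)) * Real.cos (d*s) * w s := by fun_prop
  exact (hcont.integral_hasStrictDerivAt 0 r).hasDerivAt

lemma Si_hasDeriv (c d : ℝ) (hw : Continuous w) (r : ℝ) :
    HasDerivAt (Si c d w) (Real.exp (-(c*r)) * Real.sin (d*r) * w r) r := by
  have hcont : Continuous fun s => Real.exp (-(c*s)) * Real.sin (d*s) * w s := by fun_prop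
  exact (hcont.integral_hasStrictDerivAt 0 r).hasDerivAt

lemma exp_mul_cancel (c r : ℝ) : Real.exp (c*r) * Real.exp (-(c*r)) = 1 := by
  rw [← Real.exp_add]; simp

lemma Jt_hasDeriv (hd : d ≠ 0) (hw : Continuous w) (r : ℝ) :
    HasDerivAt (Jt c d w) (w r + Ht c d w r) r := by
  have h := ((trig_hasDeriv c d (c/d) 1 r).fun_mul (Ci_hasDeriv c d hw r)).fun_add
    ((trig_hasDeriv c d 1 (-(c/d)) r).fun_mul (Si_hasDeriv c d hw r))
  refine h.congr_deriv (Eq.symm ?_)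
  unfold Ht
  have h2 := Real.sin_sq_add_cos_sq (r*d)
  have hE := exp_mul_cancel c r
  field_simp
  linear_combination (-(w r * d * Real.exp (c*r) * Real.exp (-(c*r)))) * h2 + (-(w r * d)) * hE

lemma Ht_hasDeriv (hd : d ≠ 0) (hw : Continuous w) (r : ℝ) :
    HasDerivAt (Ht c d w) (2*c*(w r + Ht c d w r) - (c^2+d^2) * Jt c d w r) r := by
  have h := ((trig_hasDeriv c d (c^2/d - d) (2*c) r).fun_mul (Ci_hasDeriv c d hw r)).fun_add
    ((trig_hasDeriv c d (2*c) (d - c^2/d) r).fun_mul (Si_hasDeriv c d hw r))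
  refine h.congr_deriv (Eq.symm ?_)
  unfold Ht Jt
  have h2 := Real.sin_sq_add_cos_sq (r*d)
  have hE := exp_mul_cancel c r
  field_simp
  linear_combination (-(2*c*w r * d * Real.exp (c*r) * Real.exp (-(c*r)))) * h2 + (-(2*c*w r * d)) * hE

end

lemma itoInt_zero (f w : ℝ → ℝ) : itoInt f w 0 = 0 := by
  unfold itoInt
  have h : (fun n : ℕ => ∑ k ∈ Finset.range n,
      f ((k : ℝ) * 0 / n) * (w (((k : ℝ) + 1) * 0 / n) - w ((k : ℝ) * 0 / n)))
      = fun _ => (0:ℝ) := by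
    funext n; simp
  rw [h]
  exact tendsto_const_nhds.limUnder_eq

section
variable {c d : ℝ} {w : ℝ → ℝ}

lemma Jt_zero : Jt c d w 0 = 0 := by
  simp [Jt, Ci, Si, intervalIntegral.integral_same]

lemma Ht_zero : Ht c d w 0 = 0 := by
  simp [Ht, Ci, Si, intervalIntegral.integral_same]

lemma Jp_eq (hd : d ≠ 0) (hw : Continuous w) (hw0 : w 0 = 0) {r : ℝ} (hr : 0 ≤ r) :
    Jp c d w r = Jt c d w r := by
  unfold Jp
  rcases hr.eq_or_lt with h|h
  · rw [← h, itoInt_zero, Jt_zero, mul_zero]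
  · set f : ℝ → ℝ := fun s => Real.exp (c*(r-s)) * Real.sin (d*(r-s)) with hfdef
    set f' : ℝ → ℝ := fun s =>
      -(Real.exp (c*(r-s)) * (c * Real.sin (d*(r-s)) + d * Real.cos (d*(r-s)))) with hf'def
    have hderiv : ∀ s, HasDerivAt f (f' s) s := by
      intro s
      have h1 : HasDerivAt (fun x : ℝ => c*(r-x)) (-c) s := by
        simpa using ((hasDerivAt_id s).const_sub r).const_mul c
      have h2 : HasDerivAt (fun x : ℝ => d*(r-x)) (-d) s := by
        simpa using ((hasDerivAt_id s).const_sub r).const_mul d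
      have := h1.exp.fun_mul h2.sin
      refine this.congr_deriv (Eq.symm ?_)
      simp only [hf'def]
      ring
    have hf'c : Continuous f' := by fun_prop
    have hval := (riemann_stieltjes hderiv hf'c hw h).limUnder_eq
    rw [show itoInt f w r = limUnder atTop (fun n : ℕ => ∑ k ∈ Finset.range n,
        f ((k : ℝ) * r / n) * (w (((k : ℝ) + 1) * r / n) - w ((k : ℝ) * r / n))) from rfl, hval]
    have hfr : f r = 0 := by simp [hfdef]
    have hkey : (∫ s in (0:ℝ)..r, f' s * w s)
        = (-(Real.exp (c*r) * (c*Real.sin (d*r) + d*Real.cos (d*r)))) * Ci c d w r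
          + (-(Real.exp (c*r) * (d*Real.sin (d*r) - c*Real.cos (d*r)))) * Si c d w r := by
      have hpt : Set.EqOn (fun s => f' s * w s) (fun s =>
          (-(Real.exp (c*r) * (c*Real.sin (d*r) + d*Real.cos (d*r))))
            * (Real.exp (-(c*s)) * Real.cos (d*s) * w s)
          + (-(Real.exp (c*r) * (d*Real.sin (d*r) - c*Real.cos (d*r))))
            * (Real.exp (-(c*s)) * Real.sin (d*s) * w s)) (Set.uIcc 0 r) := by
        intro s _
        simp only [hf'def]
        rw [show c*(r-s) = c*r + -(c*s) by ring, Real.exp_add,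
            show d*(r-s) = d*r - d*s by ring, Real.sin_sub, Real.cos_sub]
        ring
      rw [intervalIntegral.integral_congr hpt,
        intervalIntegral.integral_add
          ((by fun_prop : Continuous fun s =>
            (-(Real.exp (c*r) * (c*Real.sin (d*r) + d*Real.cos (d*r))))
              * (Real.exp (-(c*s)) * Real.cos (d*s) * w s)).intervalIntegrable 0 r)
          ((by fun_prop : Continuous fun s =>
            (-(Real.exp (c*r) * (d*Real.sin (d*r) - c*Real.cos (d*r))))
              * (Real.exp (-(c*s)) * Real.sin (d*s) * w s)).intervalIntegrable 0 r),
        intervalIntegral.integral_const_mul, intervalIntegral.integral_const_mul]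
      rfl
    rw [hkey, hfr, hw0]
    unfold Jt
    field_simp
    ring

lemma Kp_eq (hd : d ≠ 0) (hw : Continuous w) (hw0 : w 0 = 0) {r : ℝ} (hr : 0 ≤ r) :
    Kp c d w r = Kt c d w r := by
  unfold Kp
  rcases hr.eq_or_lt with h|h
  · rw [← h, itoInt_zero, mul_zero]
    simp [Kt, Ci, Si, intervalIntegral.integral_same, hw0]
  · set f : ℝ → ℝ := fun s => Real.exp (c*(r-s)) * Real.cos (d*(r-s)) with hfdef
    set f' : ℝ → ℝ := fun s =>
      -(Real.exp (c*(r-s)) * (c * Real.cos (d*(r-s)) - d * Real.sin (d*(r-s)))) with hf'def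
    have hderiv : ∀ s, HasDerivAt f (f' s) s := by
      intro s
      have h1 : HasDerivAt (fun x : ℝ => c*(r-x)) (-c) s := by
        simpa using ((hasDerivAt_id s).const_sub r).const_mul c
      have h2 : HasDerivAt (fun x : ℝ => d*(r-x)) (-d) s := by
        simpa using ((hasDerivAt_id s).const_sub r).const_mul d
      have := h1.exp.fun_mul h2.cos
      refine this.congr_deriv (Eq.symm ?_)
      simp only [hf'def]
      ring
    have hf'c : Continuous f' := by fun_prop
    have hval := (riemann_stieltjes hderiv hf'c hw h).limUnder_eq
    rw [show itoInt f w r = limUnder atTop (fun n : ℕ => ∑ k ∈ Finset.range n,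
        f ((k : ℝ) * r / n) * (w (((k : ℝ) + 1) * r / n) - w ((k : ℝ) * r / n))) from rfl, hval]
    have hfr : f r = 1 := by simp [hfdef]
    have hkey : (∫ s in (0:ℝ)..r, f' s * w s)
        = (-(Real.exp (c*r) * (c*Real.cos (d*r) - d*Real.sin (d*r)))) * Ci c d w r
          + (-(Real.exp (c*r) * (c*Real.sin (d*r) + d*Real.cos (d*r)))) * Si c d w r := by
      have hpt : Set.EqOn (fun s => f' s * w s) (fun s =>
          (-(Real.exp (c*r) * (c*Real.cos (d*r) - d*Real.sin (d*r))))
            * (Real.exp (-(c*s)) * Real.cos (d*s) * w s)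
          + (-(Real.exp (c*r) * (c*Real.sin (d*r) + d*Real.cos (d*r))))
            * (Real.exp (-(c*s)) * Real.sin (d*s) * w s)) (Set.uIcc 0 r) := by
        intro s _
        simp only [hf'def]
        rw [show c*(r-s) = c*r + -(c*s) by ring, Real.exp_add,
            show d*(r-s) = d*r - d*s by ring, Real.sin_sub, Real.cos_sub]
        ring
      rw [intervalIntegral.integral_congr hpt,
        intervalIntegral.integral_add
          ((by fun_prop : Continuous fun s =>
            (-(Real.exp (c*r) * (c*Real.cos (d*r) - d*Real.sin (d*r))))
              * (Real.exp (-(c*s)) * Real.cos (d*s) * w s)).intervalIntegrable 0 r)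
          ((by fun_prop : Continuous fun s =>
            (-(Real.exp (c*r) * (c*Real.sin (d*r) + d*Real.cos (d*r))))
              * (Real.exp (-(c*s)) * Real.sin (d*s) * w s)).intervalIntegrable 0 r),
        intervalIntegral.integral_const_mul, intervalIntegral.integral_const_mul]
      rfl
    rw [hkey, hfr, hw0]
    unfold Kt
    ring

lemma Gp_eq (hd : d ≠ 0) (hw : Continuous w) (hw0 : w 0 = 0) {r : ℝ} (hr : 0 ≤ r) :
    Gp c d w r = w r + Ht c d w r := by
  unfold Gp
  rw [Jp_eq hd hw hw0 hr, Kp_eq hd hw hw0 hr]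
  unfold Jt Kt Ht
  field_simp
  ring

end

/-- Lemma A.3(e): almost surely
`∫₀¹ G² = (c² + d²)·∫₀¹ J² + J(1)·G(1) − ∫₀¹ J dW − c·J(1)²`. -/
theorem stmt17 {Ω : Type*} [MeasurableSpace Ω] (P : Measure Ω) [IsProbabilityMeasure P]
    (W : Ω → ℝ → ℝ) (c d : ℝ) (hd : d ≠ 0)
    (hWcont : ∀ ω, Continuous (W ω)) (hW0 : ∀ ω, W ω 0 = 0) :
    ∀ᵐ ω ∂P,
      (∫ r in (0 : ℝ)..1, (Gp c d (W ω) r) ^ 2)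
        = (c ^ 2 + d ^ 2) * (∫ r in (0 : ℝ)..1, (Jp c d (W ω) r) ^ 2)
          + Jp c d (W ω) 1 * Gp c d (W ω) 1
          - itoInt (Jp c d (W ω)) (W ω) 1
          - c * (Jp c d (W ω) 1) ^ 2 := by
  apply Filter.Eventually.of_forall
  intro ω
  set w := W ω with hwdef
  have hw : Continuous w := hWcont ω
  have hw0 : w 0 = 0 := hW0 ω
  have hJd : ∀ r, HasDerivAt (Jt c d w) (w r + Ht c d w r) r := Jt_hasDeriv hd hw
  have hHd : ∀ r, HasDerivAt (Ht c d w)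
      (2*c*(w r + Ht c d w r) - (c^2+d^2) * Jt c d w r) r := Ht_hasDeriv hd hw
  have hJc : Continuous (Jt c d w) :=
    (Differentiable.continuous fun r => (hJd r).differentiableAt)
  have hHc : Continuous (Ht c d w) :=
    (Differentiable.continuous fun r => (hHd r).differentiableAt)
  have hGc : Continuous (fun r => w r + Ht c d w r) := hw.add hHc
  have hG01 : Set.EqOn (fun r => (Gp c d w r)^2) (fun r => (w r + Ht c d w r)^2)
      (Set.uIcc (0:ℝ) 1) := by
    intro r hr
    rw [Set.uIcc_of_le zero_le_one] at hr
    simp only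
    rw [Gp_eq hd hw hw0 hr.1]
  have hJ01 : Set.EqOn (fun r => (Jp c d w r)^2) (fun r => Jt c d w r * Jt c d w r)
      (Set.uIcc (0:ℝ) 1) := by
    intro r hr
    rw [Set.uIcc_of_le zero_le_one] at hr
    simp only
    rw [Jp_eq hd hw hw0 hr.1]
    ring
  rw [intervalIntegral.integral_congr hG01, intervalIntegral.integral_congr hJ01,
    Gp_eq hd hw hw0 zero_le_one, Jp_eq hd hw hw0 zero_le_one]
  -- the Itô integral of J against w
  have hito : itoInt (Jp c d w) w 1
      = Jt c d w 1 * w 1 - ∫ s in (0:ℝ)..1, (w s + Ht c d w s) * w s := by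
    have hseq : (fun n : ℕ => ∑ k ∈ Finset.range n,
        Jp c d w ((k : ℝ) * 1 / n) * (w (((k : ℝ) + 1) * 1 / n) - w ((k : ℝ) * 1 / n)))
        = (fun n : ℕ => ∑ k ∈ Finset.range n,
        Jt c d w ((k : ℝ) * 1 / n) * (w (((k : ℝ) + 1) * 1 / n) - w ((k : ℝ) * 1 / n))) := by
      funext n
      refine Finset.sum_congr rfl fun k _ => ?_
      rw [Jp_eq hd hw hw0 (by positivity)]
    have hval := (riemann_stieltjes hJd hGc hw one_pos).limUnder_eq
    unfold itoInt
    rw [hseq, hval, hw0, mul_zero, sub_zero]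
  rw [hito]
  -- FTC computations
  have hIJG : (∫ r in (0:ℝ)..1, ((w r + Ht c d w r) * Jt c d w r
      + Jt c d w r * (w r + Ht c d w r)))
      = Jt c d w 1 * Jt c d w 1 - Jt c d w 0 * Jt c d w 0 :=
    intervalIntegral.integral_eq_sub_of_hasDerivAt (fun r _ => (hJd r).mul (hJd r))
      (((hGc.mul hJc).add (hJc.mul hGc)).intervalIntegrable 0 1)
  have hIH : (∫ r in (0:ℝ)..1, ((2*c*(w r + Ht c d w r) - (c^2+d^2) * Jt c d w r) * Jt c d w r
      + Ht c d w r * (w r + Ht c d w r)))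
      = Ht c d w 1 * Jt c d w 1 - Ht c d w 0 * Jt c d w 0 :=
    intervalIntegral.integral_eq_sub_of_hasDerivAt (fun r _ => (hHd r).mul (hJd r))
      ((((((continuous_const.mul hGc).sub (continuous_const.mul hJc)).mul hJc).add
        (hHc.mul hGc))).intervalIntegrable 0 1)
  -- abbreviations
  have c1 : Continuous fun r => Jt c d w r * (w r + Ht c d w r) := hJc.mul hGc
  have c2 : Continuous fun r => Jt c d w r * Jt c d w r := hJc.mul hJc
  have c3 : Continuous fun r => Ht c d w r * (w r + Ht c d w r) := hHc.mul hGc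
  have c4 : Continuous fun r => (w r + Ht c d w r) * w r := hGc.mul hw
  have e1 : 2 * (∫ r in (0:ℝ)..1, Jt c d w r * (w r + Ht c d w r))
      = Jt c d w 1 * Jt c d w 1 := by
    rw [← intervalIntegral.integral_const_mul]
    rw [intervalIntegral.integral_congr
      (g := fun r => (w r + Ht c d w r) * Jt c d w r + Jt c d w r * (w r + Ht c d w r))
      (fun r _ => by ring), hIJG, Jt_zero, mul_zero, sub_zero]
  have e2 : 2*c*(∫ r in (0:ℝ)..1, Jt c d w r * (w r + Ht c d w r))
      - (c^2+d^2)*(∫ r in (0:ℝ)..1, Jt c d w r * Jt c d w r)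
      + (∫ r in (0:ℝ)..1, Ht c d w r * (w r + Ht c d w r))
      = Ht c d w 1 * Jt c d w 1 := by
    rw [← intervalIntegral.integral_const_mul, ← intervalIntegral.integral_const_mul,
      ← intervalIntegral.integral_sub ((show Continuous fun r => 2*c*(Jt c d w r * (w r + Ht c d w r)) from continuous_const.mul c1).intervalIntegrable 0 1)
        ((show Continuous fun r => (c^2+d^2)*(Jt c d w r * Jt c d w r) from continuous_const.mul c2).intervalIntegrable 0 1),
      ← intervalIntegral.integral_add
        ((show Continuous fun r => 2*c*(Jt c d w r * (w r + Ht c d w r)) - (c^2+d^2)*(Jt c d w r * Jt c d w r) from (continuous_const.mul c1).sub (continuous_const.mul c2)).intervalIntegrable 0 1)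
        (c3.intervalIntegrable 0 1)]
    rw [intervalIntegral.integral_congr
      (g := fun r => (2*c*(w r + Ht c d w r) - (c^2+d^2) * Jt c d w r) * Jt c d w r
        + Ht c d w r * (w r + Ht c d w r)) (fun r _ => by ring), hIH, Ht_zero, zero_mul, sub_zero]
  have e3 : (∫ r in (0:ℝ)..1, (w r + Ht c d w r)^2)
      = (∫ r in (0:ℝ)..1, Ht c d w r * (w r + Ht c d w r))
        + ∫ r in (0:ℝ)..1, (w r + Ht c d w r) * w r := by
    rw [← intervalIntegral.integral_add (c3.intervalIntegrable 0 1) (c4.intervalIntegrable 0 1)]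
    exact intervalIntegral.integral_congr (fun r _ => by ring)
  rw [e3]
  linear_combination e2 - c * e1
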